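/- Assume (H1)–(H4). Then the effective tensor admits the representation a^eff_{ijkl} = ∫_{𝕋^d} a_{pqrs}(0,y) ( δ_{rk}δ_{sl} + ∂_{rs}N_{kl}(y) ) ( δ_{pi}δ_{qj} + ∂_{pq}N_{ij}(y) ) dy, and in particular a^eff is symmetric: a^eff_{ijkl} = a^eff_{klij}. -/

import Mathlib

open MeasureTheory Filter Topology

noncomputable section

/-- First-order partial derivative `∂ᵢu`. -/
def pd {d : ℕ} (u : (Fin d → ℝ) → ℝ) (i : Fin d) (x : Fin d → ℝ) : ℝ :=
  fderiv ℝ u x (Pi.single i 1)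

/-- Second-order partial derivative `∂ᵢ∂ⱼu`. -/
def pd2 {d : ℕ} (u : (Fin d → ℝ) → ℝ) (i j : Fin d) : (Fin d → ℝ) → ℝ :=
  pd (pd u j) i

/-- Laplacian. -/
def lap {d : ℕ} (u : (Fin d → ℝ) → ℝ) (x : Fin d → ℝ) : ℝ := ∑ i, pd2 u i i x

/-- The unit cell of the torus `𝕋^d`. -/
def cube (d : ℕ) : Set (Fin d → ℝ) := {y | ∀ i, y i ∈ Set.Icc (0:ℝ) 1}

/-- `ℤ^d`-periodicity (functions on the torus `𝕋^d`). -/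
def ZPer {d : ℕ} (g : (Fin d → ℝ) → ℝ) : Prop :=
  ∀ (y : Fin d → ℝ) (m : Fin d → ℤ), g (fun i => y i + (m i : ℝ)) = g y

/-- Membership in `H²₀(Ω)`, modeled by extension by zero: `u` is (twice continuously
differentiable and) zero together with its gradient outside `Ω`. -/
def MemH20 {d : ℕ} (Ω : Set (Fin d → ℝ)) (u : (Fin d → ℝ) → ℝ) : Prop :=
  ContDiff ℝ 2 u ∧ ∀ x ∉ Ω, u x = 0 ∧ ∀ i, pd u i x = 0

/-- `L²` norm over a set. -/
def l2n {d : ℕ} (Ω : Set (Fin d → ℝ)) (f : (Fin d → ℝ) → ℝ) : ℝ :=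
  Real.sqrt (∫ x in Ω, f x ^ 2)

/-- The coefficients of the operator. -/
structure Coeffs (d : ℕ) where
  a : (Fin d → ℝ) → (Fin d → ℝ) → Fin d → Fin d → Fin d → Fin d → ℝ
  b : (Fin d → ℝ) → (Fin d → ℝ) → Fin d → Fin d → ℝ
  c : (Fin d → ℝ) → (Fin d → ℝ) → ℝ
  Λ : ℝ

/-- Local average `c̄(x) = ∫_{𝕋^d} c(x,y) dy`. -/
def cbar {d : ℕ} (P : Coeffs d) (x : Fin d → ℝ) : ℝ := ∫ y in cube d, P.c x y

/-- The Hessian matrix `H = ∇∇c̄(0)`. -/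
def Hmat {d : ℕ} (P : Coeffs d) (i j : Fin d) : ℝ := pd2 (cbar P) i j 0

/-- Hypotheses (H1)–(H4). -/
structure Hyp {d : ℕ} (Ω : Set (Fin d → ℝ)) (P : Coeffs d) : Prop where
  Λpos : 0 < P.Λ
  Ωopen : IsOpen Ω
  Ωbdd : Bornology.IsBounded Ω
  a_meas : ∀ i j k l, Measurable fun p : (Fin d → ℝ) × (Fin d → ℝ) => P.a p.1 p.2 i j k l
  b_meas : ∀ i j, Measurable fun p : (Fin d → ℝ) × (Fin d → ℝ) => P.b p.1 p.2 i j
  c_meas : Measurable fun p : (Fin d → ℝ) × (Fin d → ℝ) => P.c p.1 p.2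
  a_contx : ∀ y i j k l, Continuous fun x => P.a x y i j k l
  b_contx : ∀ y i j, Continuous fun x => P.b x y i j
  c_contx : ∀ y, ContDiff ℝ 2 fun x => P.c x y
  a_per : ∀ x i j k l, ZPer fun y => P.a x y i j k l
  b_per : ∀ x i j, ZPer fun y => P.b x y i j
  c_per : ∀ x, ZPer fun y => P.c x y
  a_bdd : ∀ x y i j k l, |P.a x y i j k l| ≤ P.Λ⁻¹
  b_bdd : ∀ x y i j, |P.b x y i j| ≤ P.Λ⁻¹
  c_bdd : ∃ M, ∀ x y, |P.c x y| ≤ M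
  a_symm : ∀ x y i j k l, P.a x y i j k l = P.a x y k l i j
  b_symm : ∀ x y i j, P.b x y i j = P.b x y j i
  a_ell : ∀ x y (ξ : Fin d → Fin d → ℝ),
    P.Λ * (∑ i, ∑ j, ξ i j ^ 2) ≤ ∑ i, ∑ j, ∑ k, ∑ l, P.a x y i j k l * ξ i j * ξ k l
  c_pos : ∀ x, ∀ᵐ y : Fin d → ℝ, 0 < P.c x y
  cbar_smooth : ContDiff ℝ 2 (cbar P)
  zero_mem : (0 : Fin d → ℝ) ∈ Ω
  cbar_min : ∀ x ∈ closure Ω, x ≠ 0 → cbar P 0 < cbar P x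
  hess_pos : ∀ ξ : Fin d → ℝ, ξ ≠ 0 → 0 < ∑ i, ∑ j, Hmat P i j * ξ i * ξ j

/-- The hypothesis (H5): uniform ellipticity of `b`. -/
def HypB {d : ℕ} (P : Coeffs d) (Λ' : ℝ) : Prop :=
  0 < Λ' ∧ ∀ x y (ξ : Fin d → ℝ),
    Λ' * (∑ i, ξ i ^ 2) ≤ ∑ i, ∑ j, P.b x y i j * ξ i * ξ j

/-- The bilinear form `A_ε` of the original problem. -/
def Aeps {d : ℕ} (P : Coeffs d) (Ω : Set (Fin d → ℝ)) (α β ε : ℝ)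
    (u v : (Fin d → ℝ) → ℝ) : ℝ :=
  (∫ x in Ω, ∑ i, ∑ j, ∑ k, ∑ l, P.a x (ε⁻¹ • x) i j k l * pd2 u i j x * pd2 v k l x)
  + ε ^ (-α) * (∫ x in Ω, ∑ i, ∑ j, P.b x (ε⁻¹ • x) i j * pd u i x * pd v j x)
  + ε ^ (-β) * (∫ x in Ω, P.c x (ε⁻¹ • x) * u x * v x)

/-- `(λ, u)` is an eigenpair of the Dirichlet spectral problem, in the weak sense. -/
def IsEigenpair {d : ℕ} (P : Coeffs d) (Ω : Set (Fin d → ℝ)) (α β ε : ℝ)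
    (lam : ℝ) (u : (Fin d → ℝ) → ℝ) : Prop :=
  MemH20 Ω u ∧ (∫ x in Ω, u x ^ 2) ≠ 0 ∧
    ∀ v, MemH20 Ω v → Aeps P Ω α β ε u v = lam * ∫ x in Ω, u x * v x

/-- An increasing enumeration (with multiplicity) of the spectrum of the Dirichlet problem,
realized by an orthogonal basis of eigenfunctions with `∫ uₖ² = c`. -/
def EigenSystem {d : ℕ} (P : Coeffs d) (Ω : Set (Fin d → ℝ)) (α β ε : ℝ)
    (lam : ℕ → ℝ) (u : ℕ → (Fin d → ℝ) → ℝ) (c : ℝ) : Prop :=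
  Monotone lam ∧ (∀ k, IsEigenpair P Ω α β ε (lam k) (u k)) ∧
  (∀ k l, (∫ x in Ω, u k x * u l x) = if k = l then c else 0) ∧
  (∀ f : (Fin d → ℝ) → ℝ, MemLp f 2 (volume.restrict Ω) →
    (∀ k, (∫ x in Ω, f x * u k x) = 0) → f =ᵐ[volume.restrict Ω] 0)

/-- Weak solution (with `C²`, periodic representative) of the cell problem
`∂ᵢⱼ(a_{ijmn}(0,y) ∂ₘₙ N_{kl}) = -∂ᵢⱼ a_{ijkl}(0,y)` on `𝕋^d`. -/
def IsCellSol {d : ℕ} (P : Coeffs d) (k l : Fin d) (N : (Fin d → ℝ) → ℝ) : Prop :=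
  ContDiff ℝ 2 N ∧ ZPer N ∧
  ∀ ψ : (Fin d → ℝ) → ℝ, ContDiff ℝ 2 ψ → ZPer ψ →
    (∫ y in cube d, ∑ i, ∑ j, ∑ m, ∑ n, P.a 0 y i j m n * pd2 N m n y * pd2 ψ i j y)
      = -∫ y in cube d, ∑ i, ∑ j, P.a 0 y i j k l * pd2 ψ i j y

/-- The effective coefficients `a^eff`. -/
def aeffOf {d : ℕ} (P : Coeffs d) (N : Fin d → Fin d → (Fin d → ℝ) → ℝ)
    (i j k l : Fin d) : ℝ :=
  ∫ y in cube d, ((∑ m, ∑ n, P.a 0 y i j m n * pd2 (N k l) m n y) + P.a 0 y i j k l)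

/-- The averaged coefficients `b̄(0)`. -/
def bbar0 {d : ℕ} (P : Coeffs d) (i j : Fin d) : ℝ := ∫ y in cube d, P.b 0 y i j

/-- Membership in `H²(ℝ^d) ∩ L²(ℝ^d, |z|²dz)` (with `C²` representative). -/
def MemH2w {d : ℕ} (u : (Fin d → ℝ) → ℝ) : Prop :=
  ContDiff ℝ 2 u ∧ MemLp u 2 (volume : Measure (Fin d → ℝ)) ∧
  (∀ i, MemLp (pd u i) 2 (volume : Measure (Fin d → ℝ))) ∧
  (∀ i j, MemLp (pd2 u i j) 2 (volume : Measure (Fin d → ℝ))) ∧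
  Integrable (fun z : Fin d → ℝ => (∑ i, z i ^ 2) * u z ^ 2)

/-- The effective bilinear form (without the `μ` zero-order term). -/
def EffForm {d : ℕ} (aeff : Fin d → Fin d → Fin d → Fin d → ℝ)
    (bb : Fin d → Fin d → ℝ) (Hm : Fin d → Fin d → ℝ)
    (u v : (Fin d → ℝ) → ℝ) : ℝ :=
  (∫ z : Fin d → ℝ, ∑ i, ∑ j, ∑ k, ∑ l, aeff i j k l * pd2 u k l z * pd2 v i j z)
  + (∫ z : Fin d → ℝ, ∑ i, ∑ j, bb i j * pd u j z * pd v i z)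
  + (∫ z : Fin d → ℝ, (1/2) * (∑ i, ∑ j, Hm i j * z i * z j) * u z * v z)

/-- `(η, v)` is an eigenpair of the effective problem
`∂ᵢⱼ(a^eff ∂ₖₗ v) - ∂ᵢ(b̄ᵢⱼ(0)∂ⱼv) + ½(Hz·z)v = ηv` on `ℝ^d`, in the weak sense. -/
def IsEffEigen {d : ℕ} (aeff : Fin d → Fin d → Fin d → Fin d → ℝ)
    (bb : Fin d → Fin d → ℝ) (Hm : Fin d → Fin d → ℝ)
    (η : ℝ) (v : (Fin d → ℝ) → ℝ) : Prop :=
  MemH2w v ∧ (∫ z : Fin d → ℝ, v z ^ 2) ≠ 0 ∧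
  ∀ φ : (Fin d → ℝ) → ℝ, ContDiff ℝ 2 φ → HasCompactSupport φ →
    EffForm aeff bb Hm v φ = η * ∫ z : Fin d → ℝ, v z * φ z

/-- Increasing enumeration of the spectrum of the effective problem with orthonormal
complete eigenfunctions. -/
def EffEigenSystem {d : ℕ} (aeff : Fin d → Fin d → Fin d → Fin d → ℝ)
    (bb : Fin d → Fin d → ℝ) (Hm : Fin d → Fin d → ℝ)
    (η : ℕ → ℝ) (v : ℕ → (Fin d → ℝ) → ℝ) : Prop :=
  Monotone η ∧ (∀ k, IsEffEigen aeff bb Hm (η k) (v k)) ∧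
  (∀ k l, (∫ z : Fin d → ℝ, v k z * v l z) = if k = l then 1 else 0) ∧
  (∀ f : (Fin d → ℝ) → ℝ, MemLp f 2 (volume : Measure (Fin d → ℝ)) →
    (∀ k, (∫ z : Fin d → ℝ, f z * v k z) = 0) → f =ᵐ[volume] 0)

/-- The rescaled domain `Ω_ε = ε^{-1/6}Ω`. -/
def Omr {d : ℕ} (Ω : Set (Fin d → ℝ)) (ε : ℝ) : Set (Fin d → ℝ) :=
  {z | (ε ^ ((1:ℝ)/6)) • z ∈ Ω}

/-- The rescaled bilinear form `A_ε` (case `β = 3α = 1`), including the shift `μ`. -/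
def Ares {d : ℕ} (P : Coeffs d) (Ω : Set (Fin d → ℝ)) (μ ε : ℝ)
    (u v : (Fin d → ℝ) → ℝ) : ℝ :=
  (∫ z in Omr Ω ε, ∑ i, ∑ j, ∑ k, ∑ l,
      P.a ((ε ^ ((1:ℝ)/6)) • z) ((ε ^ (-(5:ℝ)/6)) • z) i j k l * pd2 u k l z * pd2 v i j z)
  + (∫ z in Omr Ω ε, ∑ i, ∑ j,
      P.b ((ε ^ ((1:ℝ)/6)) • z) ((ε ^ (-(5:ℝ)/6)) • z) i j * pd u j z * pd v i z)
  + ε ^ (-(1:ℝ)/3) * (∫ z in Omr Ω ε,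
      (P.c ((ε ^ ((1:ℝ)/6)) • z) ((ε ^ (-(5:ℝ)/6)) • z) - cbar P 0) * u z * v z)
  + μ * ∫ z in Omr Ω ε, u z * v z

/-- Weak solution of the effective equation
`∂ᵢⱼ(a^eff∂ₖₗV) - ∂ᵢ(b̄ᵢⱼ∂ⱼV) + ½(Hz·z)V + μV = f` on `ℝ^d`. -/
def IsEffSol {d : ℕ} (aeff : Fin d → Fin d → Fin d → Fin d → ℝ)
    (bb : Fin d → Fin d → ℝ) (Hm : Fin d → Fin d → ℝ) (μ : ℝ)
    (f V : (Fin d → ℝ) → ℝ) : Prop :=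
  MemH2w V ∧ ∀ φ : (Fin d → ℝ) → ℝ, ContDiff ℝ 2 φ → HasCompactSupport φ →
    EffForm aeff bb Hm V φ + μ * (∫ z : Fin d → ℝ, V z * φ z) = ∫ z : Fin d → ℝ, f z * φ z

/-- Weak convergence in `L²(ℝ^d)` of a sequence of functions. -/
def WeakL2 {d : ℕ} (F : ℕ → (Fin d → ℝ) → ℝ) (f : (Fin d → ℝ) → ℝ) : Prop :=
  ∀ g : (Fin d → ℝ) → ℝ, MemLp g 2 (volume : Measure (Fin d → ℝ)) →
    Tendsto (fun n => ∫ z : Fin d → ℝ, F n z * g z) atTop (𝓝 (∫ z : Fin d → ℝ, f z * g z))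

/-- Strong convergence in `L²(ℝ^d)`. -/
def StrongL2 {d : ℕ} (F : ℕ → (Fin d → ℝ) → ℝ) (f : (Fin d → ℝ) → ℝ) : Prop :=
  Tendsto (fun n => ∫ z : Fin d → ℝ, (F n z - f z) ^ 2) atTop (𝓝 0)

/-- Weak convergence in `H²(ℝ^d)`. -/
def WeakH2 {d : ℕ} (F : ℕ → (Fin d → ℝ) → ℝ) (f : (Fin d → ℝ) → ℝ) : Prop :=
  WeakL2 F f ∧ (∀ i, WeakL2 (fun n => pd (F n) i) (pd f i)) ∧
  (∀ i j, WeakL2 (fun n => pd2 (F n) i j) (pd2 f i j))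

/-- Weak convergence in `H¹(ℝ^d)`. -/
def WeakH1 {d : ℕ} (F : ℕ → (Fin d → ℝ) → ℝ) (f : (Fin d → ℝ) → ℝ) : Prop :=
  WeakL2 F f ∧ (∀ i, WeakL2 (fun n => pd (F n) i) (pd f i))

/-- Admissible test functions `Φ(z,ζ)` for two-scale convergence: continuous, compactly
supported in `z`, periodic in `ζ`. -/
def Adm2 {d : ℕ} (Φ : (Fin d → ℝ) → (Fin d → ℝ) → ℝ) : Prop :=
  Continuous (fun p : (Fin d → ℝ) × (Fin d → ℝ) => Φ p.1 p.2) ∧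
  (∃ K : Set (Fin d → ℝ), IsCompact K ∧ ∀ z ∉ K, ∀ ζ, Φ z ζ = 0) ∧
  ∀ z, ZPer (Φ z)

/-- Two-scale convergence in `L²(ℝ^d)` at scale `ε^{5/6}` along `εs`. -/
def TwoScale {d : ℕ} (εs : ℕ → ℝ) (F : ℕ → (Fin d → ℝ) → ℝ)
    (w : (Fin d → ℝ) → (Fin d → ℝ) → ℝ) : Prop :=
  ∀ Φ, Adm2 Φ →
    Tendsto (fun n => ∫ z : Fin d → ℝ, F n z * Φ z (((εs n) ^ (-(5:ℝ)/6)) • z))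
      atTop (𝓝 (∫ z : Fin d → ℝ, ∫ ζ in cube d, w z ζ * Φ z ζ))
end


section Helpers

open MeasureTheory

lemma myContDiff_pd {d : ℕ} {u : (Fin d → ℝ) → ℝ} (hu : ContDiff ℝ 2 u) (i : Fin d) :
    ContDiff ℝ 1 (pd u i) := by
  have hu' : ContDiff ℝ ((1:ℕ) + 1) u := by exact_mod_cast hu
  have h : ContDiff ℝ 1 (fderiv ℝ u) := (contDiff_succ_iff_fderiv.mp hu').2.2
  exact (ContinuousLinearMap.apply ℝ ℝ (Pi.single i 1)).contDiff.comp h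

lemma myContinuous_pd2 {d : ℕ} {u : (Fin d → ℝ) → ℝ} (hu : ContDiff ℝ 2 u) (i j : Fin d) :
    Continuous (pd2 u i j) := by
  have h := myContDiff_pd hu j
  have h2 : Continuous (fderiv ℝ (pd u j)) := h.continuous_fderiv one_ne_zero
  exact ((ContinuousLinearMap.apply ℝ ℝ (Pi.single i 1)).continuous.comp h2)

lemma myCube_eq (d : ℕ) : cube d = Set.pi Set.univ (fun _ => Set.Icc (0:ℝ) 1) := by
  ext y; simp [cube, Set.pi]

lemma myIsCompact_cube (d : ℕ) : IsCompact (cube d) := by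
  rw [myCube_eq]; exact isCompact_univ_pi (fun _ => isCompact_Icc)

lemma myMeasurableSet_cube (d : ℕ) : MeasurableSet (cube d) := by
  rw [myCube_eq]; exact MeasurableSet.univ_pi (fun _ => measurableSet_Icc)

lemma myIntOn {d : ℕ} {f g : (Fin d → ℝ) → ℝ} (hf : Measurable f) {C : ℝ}
    (hC : ∀ y, |f y| ≤ C) (hg : Continuous g) :
    IntegrableOn (fun y => f y * g y) (cube d) := by
  obtain ⟨D, hD⟩ := (myIsCompact_cube d).exists_bound_of_continuousOn hg.continuousOn
  haveI : Fact (volume (cube d) < ⊤) := ⟨(myIsCompact_cube d).measure_lt_top⟩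
  refine ⟨((hf.mul hg.measurable).aestronglyMeasurable).restrict, ?_⟩
  refine HasFiniteIntegral.of_bounded (C := C * |D|) ?_
  rw [ae_restrict_iff' (myMeasurableSet_cube d)]
  filter_upwards with y hy
  have hC0 : 0 ≤ C := le_trans (abs_nonneg _) (hC y)
  have := hD y hy
  calc ‖f y * g y‖ = |f y| * |g y| := by rw [norm_mul]; rfl
    _ ≤ C * |D| := mul_le_mul (hC y) (le_trans this (le_abs_self D)) (abs_nonneg _) hC0

lemma mySum4_swap {d : ℕ} (f : Fin d → Fin d → Fin d → Fin d → ℝ) :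
    (∑ p, ∑ q, ∑ r, ∑ s, f p q r s) = ∑ p, ∑ q, ∑ r, ∑ s, f r s p q := by
  have h : (∑ x : Fin d × Fin d, ∑ y : Fin d × Fin d, f x.1 x.2 y.1 y.2)
      = ∑ y : Fin d × Fin d, ∑ x : Fin d × Fin d, f x.1 x.2 y.1 y.2 :=
    Finset.sum_comm
  simpa [Fintype.sum_prod_type] using h

lemma myExpand {d : ℕ} (a : Fin d → Fin d → Fin d → Fin d → ℝ) (X Y : Fin d → Fin d → ℝ)
    (i j k l : Fin d) :
    (∑ p, ∑ q, ∑ r, ∑ s, a p q r s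
        * ((if r = k then (1:ℝ) else 0) * (if s = l then (1:ℝ) else 0) + X r s)
        * ((if p = i then (1:ℝ) else 0) * (if q = j then (1:ℝ) else 0) + Y p q))
    = ((∑ r, ∑ s, a i j r s * X r s) + a i j k l) + (∑ p, ∑ q, a p q k l * Y p q)
      + (∑ p, ∑ q, ∑ r, ∑ s, a p q r s * X r s * Y p q) := by
  simp only [mul_add, add_mul, Finset.sum_add_distrib, mul_ite, ite_mul, mul_zero, zero_mul,
    mul_one, one_mul, Finset.sum_ite_irrel, Finset.sum_const_zero,
    Finset.sum_ite_eq, Finset.sum_ite_eq', Finset.mem_univ, if_true]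
  ring

end Helpers

/-- The representation of the effective tensor and its symmetry:
`a^eff_{ijkl} = ∫_{𝕋^d} a_{pqrs}(0,y)(δ_{rk}δ_{sl} + ∂_{rs}N_{kl})(δ_{pi}δ_{qj} + ∂_{pq}N_{ij}) dy`
and `a^eff_{ijkl} = a^eff_{klij}`. -/


theorem statement6 {d : ℕ} (hd : 1 ≤ d) (Ω : Set (Fin d → ℝ)) (P : Coeffs d)
    (hH : Hyp Ω P)
    (N : Fin d → Fin d → (Fin d → ℝ) → ℝ)
    (hN : ∀ k l, IsCellSol P k l (N k l)) :
    (∀ i j k l, aeffOf P N i j k l =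
      ∫ y in cube d, ∑ p, ∑ q, ∑ r, ∑ s, P.a 0 y p q r s
        * ((if r = k then (1:ℝ) else 0) * (if s = l then (1:ℝ) else 0) + pd2 (N k l) r s y)
        * ((if p = i then (1:ℝ) else 0) * (if q = j then (1:ℝ) else 0) + pd2 (N i j) p q y)) ∧
    (∀ i j k l, aeffOf P N i j k l = aeffOf P N k l i j)  := by
  classical
  have ameas : ∀ i j k l : Fin d, Measurable fun y => P.a 0 y i j k l := fun i j k l =>
    (hH.a_meas i j k l).comp (measurable_const.prodMk measurable_id)
  have abdd : ∀ (i j k l : Fin d) (y : Fin d → ℝ), |P.a 0 y i j k l| ≤ P.Λ⁻¹ :=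
    fun i j k l y => hH.a_bdd 0 y i j k l
  have hNsm : ∀ k l, ContDiff ℝ 2 (N k l) := fun k l => (hN k l).1
  have key : ∀ i j k l, aeffOf P N i j k l =
      ∫ y in cube d, ∑ p, ∑ q, ∑ r, ∑ s, P.a 0 y p q r s
        * ((if r = k then (1:ℝ) else 0) * (if s = l then (1:ℝ) else 0) + pd2 (N k l) r s y)
        * ((if p = i then (1:ℝ) else 0) * (if q = j then (1:ℝ) else 0) + pd2 (N i j) p q y) := by
    intro i j k l
    have hI1 : IntegrableOn
        (fun y => (∑ r, ∑ s, P.a 0 y i j r s * pd2 (N k l) r s y) + P.a 0 y i j k l)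
        (cube d) := by
      refine Integrable.add ?_ ?_
      · exact integrable_finset_sum _ fun r _ => integrable_finset_sum _ fun s _ =>
          myIntOn (ameas i j r s) (abdd i j r s) (myContinuous_pd2 (hNsm k l) r s)
      · simpa [IntegrableOn] using myIntOn (ameas i j k l) (abdd i j k l) (continuous_const : Continuous fun _ : Fin d → ℝ => (1:ℝ))
    have hI2 : IntegrableOn
        (fun y => ∑ p, ∑ q, P.a 0 y p q k l * pd2 (N i j) p q y) (cube d) :=
      integrable_finset_sum _ fun p _ => integrable_finset_sum _ fun q _ =>
        myIntOn (ameas p q k l) (abdd p q k l) (myContinuous_pd2 (hNsm i j) p q)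
    have hI3 : IntegrableOn
        (fun y => ∑ p, ∑ q, ∑ r, ∑ s,
          P.a 0 y p q r s * pd2 (N k l) r s y * pd2 (N i j) p q y) (cube d) := by
      refine integrable_finset_sum _ fun p _ => integrable_finset_sum _ fun q _ =>
        integrable_finset_sum _ fun r _ => integrable_finset_sum _ fun s _ => ?_
      have := myIntOn (ameas p q r s) (abdd p q r s)
        ((myContinuous_pd2 (hNsm k l) r s).mul (myContinuous_pd2 (hNsm i j) p q))
      simpa [mul_assoc, IntegrableOn] using this
    have hexp : (fun y => ∑ p, ∑ q, ∑ r, ∑ s, P.a 0 y p q r s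
        * ((if r = k then (1:ℝ) else 0) * (if s = l then (1:ℝ) else 0) + pd2 (N k l) r s y)
        * ((if p = i then (1:ℝ) else 0) * (if q = j then (1:ℝ) else 0) + pd2 (N i j) p q y))
        = fun y => (((∑ r, ∑ s, P.a 0 y i j r s * pd2 (N k l) r s y) + P.a 0 y i j k l)
          + (∑ p, ∑ q, P.a 0 y p q k l * pd2 (N i j) p q y))
          + (∑ p, ∑ q, ∑ r, ∑ s,
              P.a 0 y p q r s * pd2 (N k l) r s y * pd2 (N i j) p q y) := by
      funext y
      exact myExpand (fun p q r s => P.a 0 y p q r s) (fun r s => pd2 (N k l) r s y)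
        (fun p q => pd2 (N i j) p q y) i j k l
    have hcell := (hN k l).2.2 (N i j) (hN i j).1 (hN i j).2.1
    have hI12 : IntegrableOn
        (fun y => ((∑ r, ∑ s, P.a 0 y i j r s * pd2 (N k l) r s y) + P.a 0 y i j k l)
          + (∑ p, ∑ q, P.a 0 y p q k l * pd2 (N i j) p q y)) (cube d) := hI1.add hI2
    rw [hexp, integral_add hI12 hI3, integral_add hI1 hI2, hcell, aeffOf]
    ring
  have ptwise : ∀ (i j k l : Fin d) (y : Fin d → ℝ),
      (∑ p, ∑ q, ∑ r, ∑ s, P.a 0 y p q r s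
        * ((if r = k then (1:ℝ) else 0) * (if s = l then (1:ℝ) else 0) + pd2 (N k l) r s y)
        * ((if p = i then (1:ℝ) else 0) * (if q = j then (1:ℝ) else 0) + pd2 (N i j) p q y))
      = (∑ p, ∑ q, ∑ r, ∑ s, P.a 0 y p q r s
        * ((if r = i then (1:ℝ) else 0) * (if s = j then (1:ℝ) else 0) + pd2 (N i j) r s y)
        * ((if p = k then (1:ℝ) else 0) * (if q = l then (1:ℝ) else 0) + pd2 (N k l) p q y)) := by
    intro i j k l y
    rw [mySum4_swap (fun p q r s => P.a 0 y p q r s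
        * ((if r = k then (1:ℝ) else 0) * (if s = l then (1:ℝ) else 0) + pd2 (N k l) r s y)
        * ((if p = i then (1:ℝ) else 0) * (if q = j then (1:ℝ) else 0) + pd2 (N i j) p q y))]
    refine Finset.sum_congr rfl fun p _ => Finset.sum_congr rfl fun q _ =>
      Finset.sum_congr rfl fun r _ => Finset.sum_congr rfl fun s _ => ?_
    rw [hH.a_symm 0 y r s p q]
    ring
  refine ⟨key, fun i j k l => ?_⟩
  rw [key i j k l, key k l i j]
  exact congrArg _ (funext fun y => ptwise i j k l y)
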